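/- If f : ℤ → ℂ satisfies ∑_{k∈ℤ} |f_k|² < ∞ and a_{k-1} f_{k-1} + b_k f_k + a_k f_{k+1} = 0 for all k ∈ ℤ, then f = 0. In other words, 0 is not an eigenvalue of the doubly infinite Jacobi operator with coefficients a_k, b_k on ℓ²(ℤ). -/

import Mathlib

open Complex ComplexConjugate Filter Finset

noncomputable section

/-- `a_k = |k + ε + 1/2 + iρ|`. -/
def coefA (ρ ε : ℝ) (k : ℤ) : ℝ := ‖(k : ℂ) + (ε : ℂ) + 1/2 + I * (ρ : ℂ)‖

/-- `b_k = 2(k + ε)`. -/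
def coefB (ρ ε : ℝ) (k : ℤ) : ℝ := 2 * ((k : ℝ) + ε)

private lemma no_descent (u d : ℕ → ℝ) (B : ℝ) (K : ℕ) (hd : ∀ n, 0 ≤ d n)
    (hdiv : ¬ Summable d) (hlb : ∀ n, B ≤ u n)
    (hstep : ∀ n, K ≤ n → u (n+1) ≤ u n - d n) : False := by
  have key : ∀ m : ℕ, u (K + m) ≤ u K - ∑ j ∈ Finset.Ico K (K + m), d j := by
    intro m
    induction m with
    | zero => simp
    | succ m ih =>
      have h1 := hstep (K + m) (Nat.le_add_right _ _)
      have h2 : ∑ j ∈ Finset.Ico K (K + (m+1)), d j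
          = (∑ j ∈ Finset.Ico K (K + m), d j) + d (K + m) := by
        rw [← Nat.add_assoc]
        exact Finset.sum_Ico_succ_top (Nat.le_add_right _ _) d
      rw [h2, ← Nat.add_assoc]
      linarith
  have hpos := (not_summable_iff_tendsto_nat_atTop_of_nonneg hd).mp hdiv
  obtain ⟨n, hn1, hn2⟩ := (((hpos.eventually_gt_atTop
      ((∑ j ∈ Finset.range K, d j) + (u K - B))).and (eventually_ge_atTop K))).exists
  obtain ⟨m, rfl⟩ := Nat.exists_eq_add_of_le hn2
  have h3 : ∑ j ∈ Finset.Ico K (K + m), d j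
      = (∑ j ∈ Finset.range (K + m), d j) - ∑ j ∈ Finset.range K, d j := by
    rw [Finset.sum_Ico_eq_sub _ (Nat.le_add_right _ _)]
  have h4 := key m
  have h5 := hlb (K + m)
  rw [h3] at h4
  linarith


private lemma step_ineq (ρ C x s A2 u0 u1 r : ℝ) (hρ : 0 < ρ)
    (hA2 : A2 = x^2 + ρ^2)
    (hrec : A2 * u1 = (x^2 - ρ^2) * u0 - 2*x*ρ*r)
    (hu0 : -C^2 ≤ u0) (hr : C^2/2 ≤ r)
    (hx : 4*ρ ≤ x) (h7 : (x^2+ρ^2)*s ≤ 2*x) (hC : 0 ≤ C^2) :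
    A2 * u1 ≤ A2 * (u0 - ρ*C^2/4*s) := by
  subst hA2
  have hx0 : 0 < x := by linarith
  have h1 : (x^2+ρ^2)*(ρ*C^2/4)*s ≤ (2*x)*(ρ*C^2/4) := by
    have h1a := mul_le_mul_of_nonneg_right h7 (show (0:ℝ) ≤ ρ*C^2/4 by positivity)
    linarith [h1a]
  have h2 : x*ρ*C^2 ≤ 2*x*ρ*r := by nlinarith [mul_pos hx0 hρ]
  have h3 : 2*ρ^2*C^2 ≤ x*ρ*C^2/2 := by
    nlinarith [mul_le_mul_of_nonneg_right hx (mul_nonneg hρ.le hC)]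
  have h4 : -(2*ρ^2*C^2) ≤ 2*ρ^2*u0 := by nlinarith
  have e1 : (x^2+ρ^2)*(u0 - ρ*C^2/4*s) = (x^2+ρ^2)*u0 - (x^2+ρ^2)*(ρ*C^2/4)*s := by ring
  have e2 : (x^2-ρ^2)*u0 = (x^2+ρ^2)*u0 - 2*ρ^2*u0 := by ring
  rw [hrec, e1, e2]
  linarith [h1, h2, h3, h4]

set_option maxHeartbeats 1600000 in
/-- a square-summable solution of `a_{k-1}f_{k-1} + b_k f_k + a_k f_{k+1} = 0`
vanishes identically; i.e. `0` is not an eigenvalue of the doubly infinite Jacobi operator. -/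
theorem jacobi_operator_kernel_trivial (ρ ε : ℝ) (hρ : 0 < ρ) (hε : ε ∈ Set.Ico (0 : ℝ) 1)
    (f : ℤ → ℂ) (hf : Summable (fun k : ℤ => ‖f k‖ ^ 2))
    (hrec : ∀ k : ℤ, (coefA ρ ε (k - 1) : ℂ) * f (k - 1) + (coefB ρ ε k : ℂ) * f k +
      (coefA ρ ε k : ℂ) * f (k + 1) = 0) :
    f = 0 := by
  obtain ⟨hε0, hε1⟩ := hε
  set z : ℤ → ℂ := fun k => (((k : ℝ) + ε + 1/2 : ℝ) : ℂ) + (ρ : ℂ) * I with hzdef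
  have hz_abs : ∀ k, coefA ρ ε k = ‖z k‖ := by
    intro k
    unfold coefA
    congr 1
    simp only [hzdef]
    push_cast
    ring
  have hz_re : ∀ k : ℤ, (z k).re = (k:ℝ) + ε + 1/2 := by intro k; simp [hzdef]
  have hz_im : ∀ k : ℤ, (z k).im = ρ := by intro k; simp [hzdef]
  have hz_ne : ∀ k, z k ≠ 0 := by
    intro k h
    have h1 := hz_im k
    rw [h] at h1
    simp at h1
    exact hρ.ne h1
  have ha_pos : ∀ k, 0 < coefA ρ ε k := by
    intro k
    rw [hz_abs k]
    exact norm_pos_iff.mpr (hz_ne k)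
  have hzz : ∀ k, z k * conj (z k) = ((coefA ρ ε k : ℂ))^2 := by
    intro k
    rw [Complex.mul_conj, ← Complex.sq_norm, ← hz_abs]
    push_cast
    ring
  have hconj : ∀ k, conj (z k) = (((k : ℝ) + ε + 1/2 : ℝ) : ℂ) - (ρ : ℂ)*I := by
    intro k
    have h : z k = (((k : ℝ) + ε + 1/2 : ℝ) : ℂ) + (ρ : ℂ) * I := rfl
    rw [h, map_add, map_mul, Complex.conj_ofReal, Complex.conj_ofReal, Complex.conj_I]
    ring
  have hb1 : ∀ k : ℤ, (coefB ρ ε k : ℂ) = conj (z (k-1)) + z k := by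
    intro k
    rw [hconj]
    simp only [hzdef, coefB]
    push_cast
    ring
  have hb2 : ∀ k : ℤ, (coefB ρ ε k : ℂ) = z (k-1) + conj (z k) := by
    intro k
    rw [hconj]
    simp only [hzdef, coefB]
    push_cast
    ring
  set w : ℤ → ℂ := fun k => z k * f k + (coefA ρ ε k : ℂ) * f (k+1) with hwdef
  set v : ℤ → ℂ := fun k => conj (z k) * f k + (coefA ρ ε k : ℂ) * f (k+1) with hvdef
  have hw : ∀ k : ℤ, (coefA ρ ε (k-1) : ℂ) * w k = -(conj (z (k-1)) * w (k-1)) := by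
    intro k
    have hr := hrec k
    have h1 := hzz (k-1)
    have h2 := hb1 k
    simp only [hwdef, sub_add_cancel]
    linear_combination (coefA ρ ε (k-1) : ℂ) * hr - ((coefA ρ ε (k-1) : ℂ) * f k) * h2
      + f (k-1) * h1
  have hv : ∀ k : ℤ, (coefA ρ ε (k-1) : ℂ) * v k = -(z (k-1) * v (k-1)) := by
    intro k
    have hr := hrec k
    have h1 := hzz (k-1)
    have h2 := hb2 k
    simp only [hvdef, sub_add_cancel]
    linear_combination (coefA ρ ε (k-1) : ℂ) * hr - ((coefA ρ ε (k-1) : ℂ) * f k) * h2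
      + f (k-1) * h1
  -- constancy of |w| and |v|
  have hstep_w : ∀ k : ℤ, ‖w k‖ = ‖w (k-1)‖ := by
    intro k
    have h := congrArg (‖·‖) (hw k)
    simp only [norm_mul, norm_neg, Complex.norm_real, Real.norm_eq_abs, Complex.norm_conj,
      abs_of_pos (ha_pos (k-1)), ← hz_abs] at h
    exact mul_left_cancel₀ (ha_pos (k-1)).ne' h
  have hstep_v : ∀ k : ℤ, ‖v k‖ = ‖v (k-1)‖ := by
    intro k
    have h := congrArg (‖·‖) (hv k)
    simp only [norm_mul, norm_neg, Complex.norm_real, Real.norm_eq_abs, Complex.norm_conj,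
      abs_of_pos (ha_pos (k-1)), ← hz_abs] at h
    exact mul_left_cancel₀ (ha_pos (k-1)).ne' h
  have habs_w : ∀ k : ℤ, ‖w k‖ = ‖w 0‖ := by
    intro k
    induction k using Int.induction_on with
    | zero => rfl
    | succ n ih =>
      have h := hstep_w ((n:ℤ)+1)
      rw [add_sub_cancel_right] at h
      exact h.trans ih
    | pred n ih =>
      have h := hstep_w (-(n:ℤ))
      rw [← h]
      exact ih
  have habs_v : ∀ k : ℤ, ‖v k‖ = ‖v 0‖ := by
    intro k
    induction k using Int.induction_on with
    | zero => rfl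
    | succ n ih =>
      have h := hstep_v ((n:ℤ)+1)
      rw [add_sub_cancel_right] at h
      exact h.trans ih
    | pred n ih =>
      have h := hstep_v (-(n:ℤ))
      rw [← h]
      exact ih
  set C1 := ‖w 0‖ with hC1def
  set C2 := ‖v 0‖ with hC2def
  -- w - v = 2ρi f
  have hwv : ∀ k : ℤ, w k - v k = (2*(ρ:ℂ)*I) * f k := by
    intro k
    have h : z k - conj (z k) = 2*(ρ:ℂ)*I := by
      rw [hconj]
      ring
    simp only [hwdef, hvdef]
    linear_combination f k * h
  -- summability on ℕ
  have hsum : Summable (fun n : ℕ => ‖f n‖ ^ 2) :=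
    hf.comp_injective (fun a b h => by simpa using h)
  have t2 : Tendsto (fun n : ℕ => ‖f n‖ ^ 2) atTop (nhds 0) :=
    hsum.tendsto_atTop_zero
  -- re formula
  have hr_formula : ∀ n : ℤ, (w n * conj (v n)).re
      = (C1^2 + C2^2 - 4*ρ^2*‖f n‖^2)/2 := by
    intro n
    have h1 := Complex.normSq_sub (w n) (v n)
    have h2 : Complex.normSq (w n - v n) = 4*ρ^2*‖f n‖^2 := by
      rw [hwv n, map_mul, ← Complex.sq_norm (f n)]
      have h5 : Complex.normSq (2*(ρ:ℂ)*I) = 4*ρ^2 := by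
        simp [Complex.normSq_apply]
        ring
      rw [h5]
    have h3 : Complex.normSq (w n) = C1^2 := by
      rw [← Complex.sq_norm, habs_w n]
    have h4 : Complex.normSq (v n) = C2^2 := by
      rw [← Complex.sq_norm, habs_v n]
    rw [h2, h3, h4] at h1
    linarith
  have hre_le : ∀ n : ℤ, (w n * conj (v n)).re ≤ C1 * C2 := by
    intro n
    calc (w n * conj (v n)).re ≤ ‖w n * conj (v n)‖ := Complex.re_le_norm _
    _ = C1 * C2 := by rw [norm_mul, Complex.norm_conj, habs_w, habs_v]
  have hC12 : C1 = C2 := by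
    have hlim : Tendsto (fun n : ℕ => (w n * conj (v n)).re) atTop
        (nhds ((C1^2 + C2^2)/2)) := by
      have heq : (fun n : ℕ => (w n * conj (v n)).re)
          = fun n : ℕ => (C1^2 + C2^2 - 4*ρ^2*‖f n‖^2)/2 :=
        funext fun n => hr_formula n
      rw [heq]
      have h5 := ((tendsto_const_nhds (x := C1^2 + C2^2)).sub
        (t2.const_mul (4*ρ^2))).div_const 2
      simp only [mul_zero, sub_zero] at h5
      exact h5
    have hle := le_of_tendsto hlim (Eventually.of_forall fun n => hre_le n)
    have hsq : (C1 - C2)^2 ≤ 0 := by nlinarith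
    have hsq2 : (C1 - C2)^2 = 0 := le_antisymm hsq (sq_nonneg _)
    have h0 : C1 - C2 = 0 := pow_eq_zero_iff two_ne_zero |>.mp hsq2
    linarith
  rcases eq_or_lt_of_le (norm_nonneg (w 0)) with hC0 | hCpos
  · -- C1 = 0 case: everything vanishes
    funext k
    have hw0 : w k = 0 := by
      have h : ‖w k‖ = 0 := by rw [habs_w k]; exact hC0.symm
      exact norm_eq_zero.mp h
    have hv0 : v k = 0 := by
      have h : ‖v k‖ = 0 := by rw [habs_v k, ← hC12]; exact hC0.symm
      exact norm_eq_zero.mp h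
    have h' : (2*(ρ:ℂ)*I) * f k = 0 := by
      rw [← hwv k, hw0, hv0, sub_zero]
    have h2 : (2*(ρ:ℂ)*I) ≠ 0 := by
      simp [Complex.ext_iff, hρ.ne']
    have h3 := (mul_eq_zero.mp h').resolve_left h2
    simpa using h3
  · -- C1 > 0 case : contradiction
    exfalso
    set C := C1 with hCdef
    -- P recursion
    have hP : ∀ k : ℤ, ((coefA ρ ε (k-1) : ℂ))^2 * (w k * conj (v k))
        = (conj (z (k-1)))^2 * (w (k-1) * conj (v (k-1))) := by
      intro k
      have h1 := hw k
      have h2 := congrArg conj (hv k)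
      simp only [map_mul, map_neg, Complex.conj_ofReal] at h2
      linear_combination ((coefA ρ ε (k-1) : ℂ) * conj (v k)) * h1
        - (conj (z (k-1)) * w (k-1)) * h2
    set u : ℕ → ℝ := fun n => (w (n : ℤ) * conj (v (n : ℤ))).im with hudef
    set r : ℕ → ℝ := fun n => (w (n : ℤ) * conj (v (n : ℤ))).re with hrdef
    set d : ℕ → ℝ := fun n => ρ*C^2/4 * (1/((n:ℝ)+2)) with hddef
    have habsP : ∀ n : ℤ, ‖w n * conj (v n)‖ = C^2 := by
      intro n
      rw [norm_mul, Complex.norm_conj, habs_w, habs_v, ← hC12, sq]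
    -- the recursion in real terms
    have hrec_im : ∀ n : ℕ, (coefA ρ ε (n:ℤ))^2 * u (n+1)
        = ((((n:ℤ):ℝ) + ε + 1/2)^2 - ρ^2) * u n
          - 2*((((n:ℤ):ℝ)) + ε + 1/2)*ρ * r n := by
      intro n
      have h := hP ((n:ℤ)+1)
      rw [show ((n:ℤ)+1-1) = (n:ℤ) by ring] at h
      have him := congrArg Complex.im h
      simp only [Complex.mul_im, Complex.mul_re, pow_two, Complex.ofReal_re,
        Complex.ofReal_im, Complex.conj_re, Complex.conj_im, hz_re, hz_im] at him
      simp only [hudef, hrdef, Complex.mul_im, Complex.mul_re, pow_two,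
        Complex.conj_re, Complex.conj_im]
      push_cast
      push_cast at him
      linarith [him]
    have hA2 : ∀ k : ℤ, (coefA ρ ε k)^2 = ((k:ℝ) + ε + 1/2)^2 + ρ^2 := by
      intro k
      rw [hz_abs, Complex.sq_norm, Complex.normSq_apply, hz_re, hz_im]
      ring
    -- eventual bounds
    have hC2pos : (0:ℝ) < C^2 := by positivity
    have hev : ∀ᶠ n : ℕ in atTop, ‖f (n:ℤ)‖^2 < C^2/(4*ρ^2) := by
      apply t2.eventually_lt_const
      positivity
    obtain ⟨K1, hK1⟩ := eventually_atTop.mp hev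
    set K := max K1 (Nat.ceil (4*ρ)) with hKdef
    -- step inequality
    have hstep : ∀ n, K ≤ n → u (n+1) ≤ u n - d n := by
      intro n hn
      have hn1 : K1 ≤ n := le_trans (le_max_left _ _) hn
      have hn2 : (4*ρ : ℝ) ≤ n := by
        have h := le_trans (le_max_right _ _) hn
        exact le_trans (Nat.le_ceil _) (by exact_mod_cast h)
      have hcast : (((n:ℤ)):ℝ) = (n:ℝ) := by push_cast; ring
      have hrec_n := hrec_im n
      rw [hcast] at hrec_n
      have hA2n := hA2 (n:ℤ)
      rw [hcast] at hA2n
      have hA2pos : (0:ℝ) < (coefA ρ ε (n:ℤ))^2 := pow_pos (ha_pos _) 2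
      have hu_bd : |u n| ≤ C^2 := by
        simp only [hudef]
        calc |(w (n:ℤ) * conj (v (n:ℤ))).im| ≤ ‖w (n:ℤ) * conj (v (n:ℤ))‖ :=
          Complex.abs_im_le_norm _
        _ = C^2 := habsP _
      have hu_bd1 : -C^2 ≤ u n := (abs_le.mp hu_bd).1
      have hr_ge : C^2/2 ≤ r n := by
        have h1 := hr_formula (n:ℤ)
        have h2 := hK1 n hn1
        have h3 : 4*ρ^2 * ‖f (n:ℤ)‖^2 ≤ C^2 := by
          have h4 : (0:ℝ) < 4*ρ^2 := by positivity
          have h5 := mul_le_mul_of_nonneg_left h2.le h4.le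
          have h6 : 4*ρ^2 * (C^2/(4*ρ^2)) = C^2 := by field_simp
          linarith
        simp only [hrdef]
        rw [h1, ← hC12]
        linarith
      have hx0 : (0:ℝ) < (n:ℝ)+ε+1/2 := by positivity
      have hx4 : 4*ρ ≤ (n:ℝ)+ε+1/2 := by linarith
      have hxle : (n:ℝ)+ε+1/2 ≤ (n:ℝ)+2 := by linarith
      have hs0 : (0:ℝ) < 1/((n:ℝ)+2) := by positivity
      have h7a : ((n:ℝ)+ε+1/2)^2 + ρ^2 ≤ 2*((n:ℝ)+ε+1/2)*((n:ℝ)+2) := by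
        nlinarith [mul_le_mul_of_nonneg_left hxle hx0.le, mul_pos hx0 hx0]
      have h7 : (((n:ℝ)+ε+1/2)^2 + ρ^2)*(1/((n:ℝ)+2)) ≤ 2*((n:ℝ)+ε+1/2) := by
        have h8 := mul_le_mul_of_nonneg_right h7a hs0.le
        have h9 : 2*((n:ℝ)+ε+1/2)*((n:ℝ)+2)*(1/((n:ℝ)+2)) = 2*((n:ℝ)+ε+1/2) := by
          field_simp
        linarith [h8, h9]
      have key := step_ineq ρ C ((n:ℝ)+ε+1/2) (1/((n:ℝ)+2)) ((coefA ρ ε (n:ℤ))^2)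
        (u n) (u (n+1)) (r n) hρ hA2n hrec_n hu_bd1 hr_ge hx4 h7 (sq_nonneg C)
      have hd_eq : d n = ρ*C^2/4 * (1/((n:ℝ)+2)) := by simp only [hddef]
      rw [hd_eq]
      exact le_of_mul_le_mul_left key hA2pos
    -- apply descent lemma
    have hd_nonneg : ∀ n, 0 ≤ d n := by
      intro n
      simp only [hddef]
      positivity
    have hdiv : ¬ Summable d := by
      intro hsumd
      simp only [hddef] at hsumd
      have h1 : Summable (fun n : ℕ => 1/((n:ℝ)+2)) :=
        (summable_mul_left_iff (show (ρ*C^2/4 : ℝ) ≠ 0 by positivity)).mp hsumd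
      have h3 : Summable (fun n : ℕ => 1/(((n+2:ℕ)):ℝ)) := by
        have heq : (fun n : ℕ => 1/(((n+2:ℕ)):ℝ)) = (fun n : ℕ => 1/((n:ℝ)+2)) := by
          funext n; push_cast; ring
        rw [heq]; exact h1
      have h4 := (summable_nat_add_iff (f := fun n : ℕ => 1/(n:ℝ)) 2).mp h3
      exact Real.not_summable_one_div_natCast h4
    have hlb : ∀ n, -C^2 ≤ u n := by
      intro n
      have h : |u n| ≤ C^2 := by
        simp only [hudef]
        calc |(w (n:ℤ) * conj (v (n:ℤ))).im| ≤ ‖w (n:ℤ) * conj (v (n:ℤ))‖ :=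
          Complex.abs_im_le_norm _
        _ = C^2 := habsP _
      linarith [(abs_le.mp h).1]
    exact no_descent u d (-C^2) K hd_nonneg hdiv hlb hstep
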